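/- In a directed graph, let X and Y be vertex sets such that every vertex outside X ∪ Y has in-degree and out-degree both equal to 1 or both equal to 0, every vertex in X \ Y has in-degree 0 and out-degree 1, every vertex in Y \ X has out-degree 0 and in-degree 1, and vertices in X ∩ Y have in-degree and out-degree 0. Then every weakly connected component meeting X is either a finite directed path from X ending in Y, or a directed ray starting in X. -/

import Mathlib

open Set


/-- A finite directed path/walk or a ray, encoded by a vertex function and a length:
the number of edges, `⊤` for a ray. Only indices `≤ len` are meaningful. -/
structure DiWalk (V : Type*) where
  vtx : ℕ → V
  len : ℕ∞

namespace DiWalk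

variable {V : Type*} (w : DiWalk V)

/-- The vertices of the walk. -/
def support : Set V := {v | ∃ i : ℕ, (i : ℕ∞) ≤ w.len ∧ w.vtx i = v}

/-- The directed edges of the walk. -/
def edges : Set (V × V) := {e | ∃ i : ℕ, (i : ℕ∞) + 1 ≤ w.len ∧ e = (w.vtx i, w.vtx (i + 1))}

/-- The initial vertex. -/
def Ini : V := w.vtx 0

/-- The terminal vertex (meaningful for finite walks). -/
def Ter : V := w.vtx w.len.toNat

/-- `w` is a ray, i.e. one-way infinite. -/
def IsRay : Prop := w.len = ⊤

/-- `w` is a (finite) directed path or a directed ray in the digraph `D`: consecutive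
vertices are joined by edges of `D` and no vertex is repeated. -/
def IsPathIn (D : V → V → Prop) : Prop :=
  (∀ i : ℕ, (i : ℕ∞) + 1 ≤ w.len → D (w.vtx i) (w.vtx (i + 1))) ∧
  (∀ i j : ℕ, (i : ℕ∞) ≤ w.len → (j : ℕ∞) ≤ w.len → w.vtx i = w.vtx j → i = j)

end DiWalk

variable {V : Type*}

/-- The vertex set of a family of walks. -/
def VSet (Q : Set (DiWalk V)) : Set V := ⋃ q ∈ Q, q.support

/-- The edge set of a family of walks. -/
def ESet (Q : Set (DiWalk V)) : Set (V × V) := ⋃ q ∈ Q, q.edges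

/-- The set of initial vertices of a family of walks. -/
def IniSet (Q : Set (DiWalk V)) : Set V := DiWalk.Ini '' Q

/-- The set of terminal vertices of the finite members of a family of walks. -/
def TerSet (Q : Set (DiWalk V)) : Set V := {v | ∃ q ∈ Q, ¬ q.IsRay ∧ q.Ter = v}

/-- The members of `Q` are pairwise vertex-disjoint. -/
def PairwiseDisjointWalks (Q : Set (DiWalk V)) : Prop :=
  ∀ p ∈ Q, ∀ q ∈ Q, p ≠ q → Disjoint p.support q.support

/-- `Q` is a set of pairwise disjoint directed paths or rays in `D`. -/
def IsPathSystem (D : V → V → Prop) (Q : Set (DiWalk V)) : Prop :=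
  (∀ q ∈ Q, q.IsPathIn D) ∧ PairwiseDisjointWalks Q

/-- A linkage in the dimaze `(D, B0)`: a set of pairwise disjoint finite directed paths
ending in `B0`. -/
def IsLinkage (D : V → V → Prop) (B0 : Set V) (Q : Set (DiWalk V)) : Prop :=
  IsPathSystem D Q ∧ ∀ q ∈ Q, ¬ q.IsRay ∧ q.Ter ∈ B0

/-- `I` is linkable to `B0` in `(D, B0)`. -/
def Linkable (D : V → V → Prop) (B0 : Set V) (I : Set V) : Prop :=
  ∃ Q, IsLinkage D B0 Q ∧ IniSet Q = I

/-- `I` is linkable onto `B0`: some linkage from `I` has terminal vertex set exactly `B0`. -/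
def LinkableOnto (D : V → V → Prop) (B0 : Set V) (I : Set V) : Prop :=
  ∃ Q, IsLinkage D B0 Q ∧ IniSet Q = I ∧ TerSet Q = B0

/-- `B0` is a set of sinks of `D`. -/
def IsDimaze (D : V → V → Prop) (B0 : Set V) : Prop := ∀ b ∈ B0, ∀ v, ¬ D b v

/-- `v` is the centre of a linking fan: infinitely many non-trivial directed paths to `B0`
from `v`, pairwise meeting only in `v`. -/
def IsFanCentre (D : V → V → Prop) (B0 : Set V) (v : V) : Prop :=
  ∃ P : Set (DiWalk V), P.Infinite ∧
    (∀ p ∈ P, p.IsPathIn D ∧ ¬ p.IsRay ∧ 1 ≤ p.len ∧ p.Ini = v ∧ p.Ter ∈ B0) ∧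
    (∀ p ∈ P, ∀ q ∈ P, p ≠ q → p.support ∩ q.support ⊆ {v})

/-- The ray `R` is the spine of an outgoing comb with teeth ending in `B0`: there are
infinitely many pairwise disjoint non-trivial paths from distinct vertices of `R` to `B0`,
each meeting `R` exactly in its initial vertex. -/
def IsSpine (D : V → V → Prop) (B0 : Set V) (R : DiWalk V) : Prop :=
  R.IsPathIn D ∧ R.IsRay ∧
  ∃ P : Set (DiWalk V), P.Infinite ∧
    (∀ p ∈ P, p.IsPathIn D ∧ ¬ p.IsRay ∧ 1 ≤ p.len ∧ p.Ini ∈ R.support ∧ p.Ter ∈ B0 ∧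
      p.support ∩ R.support = {p.Ini}) ∧
    PairwiseDisjointWalks P

/-- `(D, B0)` contains no subdivision of an outgoing comb. -/
def COFree (D : V → V → Prop) (B0 : Set V) : Prop := ¬ ∃ R, IsSpine D B0 R

/-- `(D, B0)` contains no subdivision of a linking fan. -/
def FanFree (D : V → V → Prop) (B0 : Set V) : Prop := ¬ ∃ v, IsFanCentre D B0 v

/-- A topological path in `(D, B0)`. -/
def IsTopPath (D : V → V → Prop) (B0 : Set V) (w : DiWalk V) : Prop :=
  w.IsPathIn D ∧
    ((¬ w.IsRay ∧ w.Ter ∈ B0) ∨ (¬ w.IsRay ∧ IsFanCentre D B0 w.Ter) ∨ IsSpine D B0 w)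

/-- `I` is topologically linkable in `(D, B0)`. -/
def TopLinkable (D : V → V → Prop) (B0 : Set V) (I : Set V) : Prop :=
  ∃ Q : Set (DiWalk V), (∀ q ∈ Q, IsTopPath D B0 q) ∧ PairwiseDisjointWalks Q ∧ IniSet Q = I

noncomputable def DWseq {V : Type*} (D : V → V → Prop) (v : V) : ℕ → V :=
  fun n => Nat.rec v (fun _ u =>
    @dite _ (∃ w, D u w) (Classical.propDecidable _) (fun h => h.choose) (fun _ => u)) n

theorem components_are_paths_or_rays {V : Type*} (D : V → V → Prop) (X Y : Set V)
    (h0 : ∀ v, v ∉ X ∪ Y →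
      ((∃! u, D u v) ∧ (∃! u, D v u)) ∨ ((¬ ∃ u, D u v) ∧ (¬ ∃ u, D v u)))
    (hX : ∀ v ∈ X \ Y, (¬ ∃ u, D u v) ∧ (∃! u, D v u))
    (hY : ∀ v ∈ Y \ X, (∃! u, D u v) ∧ (¬ ∃ u, D v u))
    (hXY : ∀ v ∈ X ∩ Y, (¬ ∃ u, D u v) ∧ (¬ ∃ u, D v u)) :
    ∀ v ∈ X, ∃ w : DiWalk V, w.IsPathIn D ∧ w.Ini ∈ X ∧
      w.support = {u | Relation.ReflTransGen (fun a b => D a b ∨ D b a) v u} ∧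
      (w.IsRay ∨ w.Ter ∈ Y) := by
  classical
  intro v hv
  set f := DWseq D v with hfdef
  have hf0 : f 0 = v := rfl
  have hfs : ∀ n, f (n + 1) = @dite _ (∃ w, D (f n) w) (Classical.propDecidable _)
      (fun h => h.choose) (fun _ => f n) := fun n => rfl
  have hstep : ∀ n, (∃ w, D (f n) w) → D (f n) (f (n + 1)) := by
    intro n h
    rw [hfs n, dif_pos h]
    exact h.choose_spec
  have hmono : ∀ m, (¬ ∃ u, D (f m) u) → ∀ k, f (m + k) = f m := by
    intro m hm k
    induction k with
    | zero => rfl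
    | succ k ih =>
      have h2 : f (m + k + 1) = f (m + k) := by
        rw [hfs (m + k), dif_neg (ih ▸ hm)]
      rw [← Nat.add_assoc, h2, ih]
  obtain ⟨len, hiff, hray⟩ : ∃ len : ℕ∞,
      (∀ i : ℕ, ((i : ℕ∞) + 1 ≤ len ↔ ∃ u, D (f i) u)) ∧
      (len = ⊤ ∨ ∃ N : ℕ, len = (N : ℕ∞) ∧ ¬ ∃ u, D (f N) u) := by
    by_cases h : ∃ n, ¬ ∃ w, D (f n) w
    · obtain ⟨N, hNspec, hNmin⟩ : ∃ N : ℕ, (¬ ∃ w, D (f N) w) ∧ ∀ m < N, ∃ w, D (f m) w :=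
        ⟨Nat.find h, Nat.find_spec h, fun m hm => not_not.mp (Nat.find_min h hm)⟩
      refine ⟨(N : ℕ∞), ?_, Or.inr ⟨N, rfl, hNspec⟩⟩
      intro i
      rw [show ((i : ℕ∞) + 1) = ((i + 1 : ℕ) : ℕ∞) by push_cast; ring, Nat.cast_le]
      constructor
      · intro hle
        exact hNmin i (by omega)
      · intro he
        by_contra hc
        push_neg at hc
        have hNle : N ≤ i := by omega
        have heq := hmono N hNspec (i - N)
        rw [Nat.add_sub_cancel' hNle] at heq
        rw [heq] at he
        exact hNspec he
    · push_neg at h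
      exact ⟨⊤, fun i => by simp only [le_top, true_iff]; exact h i, Or.inl rfl⟩
  have hedge : ∀ i : ℕ, (i : ℕ∞) + 1 ≤ len → D (f i) (f (i + 1)) :=
    fun i hi => hstep i ((hiff i).mp hi)
  have hnoin0 : ¬ ∃ u, D u (f 0) := by
    rw [hf0]
    by_cases hvy : v ∈ Y
    · exact (hXY v ⟨hv, hvy⟩).1
    · exact (hX v ⟨hv, hvy⟩).1
  have houtu : ∀ i : ℕ, (i : ℕ∞) ≤ len → ∀ a, D (f i) a → ∀ b, D (f i) b → a = b := by
    intro i hi a ha b hb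
    cases i with
    | zero =>
      rw [hf0] at ha hb
      by_cases hvy : v ∈ Y
      · exact absurd ⟨a, ha⟩ (hXY v ⟨hv, hvy⟩).2
      · obtain ⟨u, -, hu⟩ := (hX v ⟨hv, hvy⟩).2
        rw [hu a ha, hu b hb]
    | succ k =>
      have hk1 : (k : ℕ∞) + 1 ≤ len := by push_cast at hi ⊢; exact hi
      have hkin : D (f k) (f (k + 1)) := hedge k hk1
      by_cases hx : f (k + 1) ∈ X
      · by_cases hy : f (k + 1) ∈ Y
        · exact absurd ⟨f k, hkin⟩ (hXY _ ⟨hx, hy⟩).1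
        · exact absurd ⟨f k, hkin⟩ (hX _ ⟨hx, hy⟩).1
      · by_cases hy : f (k + 1) ∈ Y
        · exact absurd ⟨a, ha⟩ (hY _ ⟨hy, hx⟩).2
        · rcases h0 (f (k + 1)) (by simp [Set.mem_union, hx, hy]) with ⟨-, u, -, hu⟩ | ⟨-, hno⟩
          · rw [hu a ha, hu b hb]
          · exact absurd ⟨a, ha⟩ hno
  have hinu : ∀ k : ℕ, ((k : ℕ∞) + 1 ≤ len) →
      ∀ a, D a (f (k + 1)) → ∀ b, D b (f (k + 1)) → a = b := by
    intro k hk a ha b hb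
    have hkin : D (f k) (f (k + 1)) := hedge k hk
    by_cases hx : f (k + 1) ∈ X
    · by_cases hy : f (k + 1) ∈ Y
      · exact absurd ⟨f k, hkin⟩ (hXY _ ⟨hx, hy⟩).1
      · exact absurd ⟨f k, hkin⟩ (hX _ ⟨hx, hy⟩).1
    · by_cases hy : f (k + 1) ∈ Y
      · obtain ⟨u, -, hu⟩ := (hY _ ⟨hy, hx⟩).1
        rw [hu a ha, hu b hb]
      · rcases h0 (f (k + 1)) (by simp [Set.mem_union, hx, hy]) with ⟨⟨u, -, hu⟩, -⟩ | ⟨hno, -⟩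
        · rw [hu a ha, hu b hb]
        · exact absurd ⟨f k, hkin⟩ hno
  have key : ∀ i j : ℕ, i ≤ j → (j : ℕ∞) ≤ len → f i = f j → i = j := by
    intro i
    induction i with
    | zero =>
      intro j _ hj he
      cases j with
      | zero => rfl
      | succ k =>
        have hk1 : (k : ℕ∞) + 1 ≤ len := by push_cast at hj ⊢; exact hj
        exact absurd ⟨f k, he ▸ hedge k hk1⟩ hnoin0
    | succ m ih =>
      intro j hij hj he
      cases j with
      | zero => omega
      | succ k =>
        have hk1 : (k : ℕ∞) + 1 ≤ len := by push_cast at hj ⊢; exact hj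
        have hm1 : (m : ℕ∞) + 1 ≤ len := by
          refine le_trans ?_ hk1
          have : (m : ℕ∞) ≤ (k : ℕ∞) := by exact_mod_cast Nat.succ_le_succ_iff.mp hij
          exact add_le_add_left this 1
        have hmk : f m = f k :=
          hinu k hk1 (f m) (he ▸ hedge m hm1) (f k) (hedge k hk1)
        have := ih k (by omega) (le_trans le_self_add hk1) hmk
        omega
  have hinj : ∀ i j : ℕ, (i : ℕ∞) ≤ len → (j : ℕ∞) ≤ len → f i = f j → i = j := by
    intro i j hi hj he
    rcases le_total i j with h | h
    · exact key i j h hj he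
    · exact (key j i h hi he.symm).symm
  have hreach : ∀ i : ℕ, (i : ℕ∞) ≤ len →
      Relation.ReflTransGen (fun a b => D a b ∨ D b a) v (f i) := by
    intro i
    induction i with
    | zero => intro _; rw [hf0]
    | succ k ih =>
      intro hi
      have hk1 : (k : ℕ∞) + 1 ≤ len := by push_cast at hi ⊢; exact hi
      exact (ih (le_trans le_self_add hk1)).tail (Or.inl (hedge k hk1))
  have hback : ∀ u, Relation.ReflTransGen (fun a b => D a b ∨ D b a) v u →
      ∃ i : ℕ, (i : ℕ∞) ≤ len ∧ f i = u := by
    intro u hu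
    induction hu with
    | refl => exact ⟨0, zero_le, hf0⟩
    | tail hab hR ih =>
      obtain ⟨i, hi, rfl⟩ := ih
      rcases hR with hbc | hcb
      · have h1 : (i : ℕ∞) + 1 ≤ len := (hiff i).mpr ⟨_, hbc⟩
        refine ⟨i + 1, by push_cast; exact h1, ?_⟩
        exact (houtu i hi _ hbc _ (hedge i h1)).symm
      · cases i with
        | zero => exact absurd ⟨_, hcb⟩ hnoin0
        | succ k =>
          have hk1 : (k : ℕ∞) + 1 ≤ len := by push_cast at hi ⊢; exact hi
          exact ⟨k, le_trans le_self_add hk1, hinu k hk1 _ (hedge k hk1) _ hcb⟩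
  refine ⟨⟨f, len⟩, ⟨fun i hi => hedge i hi, fun i j hi hj he => hinj i j hi hj he⟩,
    ?_, ?_, ?_⟩
  · show f 0 ∈ X
    rw [hf0]; exact hv
  · ext u
    constructor
    · rintro ⟨i, hi, rfl⟩
      exact hreach i hi
    · intro hu
      obtain ⟨i, hi, rfl⟩ := hback u hu
      exact ⟨i, hi, rfl⟩
  · rcases hray with htop | ⟨N, hlen, hNs⟩
    · left
      exact htop
    · right
      show f (len.toNat) ∈ Y
      rw [hlen]
      simp only [ENat.toNat_coe]
      cases N with
      | zero =>
        rw [hf0] at hNs ⊢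
        by_contra hvy
        exact hNs ((hX v ⟨hv, hvy⟩).2.exists)
      | succ k =>
        have hk1 : (k : ℕ∞) + 1 ≤ len := by rw [hlen]; push_cast; exact le_refl _
        have hkin : D (f k) (f (k + 1)) := hedge k hk1
        by_contra hy
        by_cases hx : f (k + 1) ∈ X
        · exact absurd ⟨f k, hkin⟩ (hX _ ⟨hx, hy⟩).1
        · rcases h0 (f (k + 1)) (by simp [Set.mem_union, hx, hy]) with ⟨-, hex⟩ | ⟨hno, -⟩
          · exact absurd hex.exists hNs
          · exact absurd ⟨f k, hkin⟩ hno
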